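/- Let Ω₁ and Ω₂ be n×n real symmetric matrices with rank(Ω₁) + rank(Ω₂) = n and ker Ω₁ ∩ ker Ω₂ = {0}. Then for all t ∉ {0, 1}, the matrix t·Ω₁ + (1−t)·Ω₂ is nonsingular. -/

import Mathlib

open Matrix in

theorem combining_symmetric_matrices_nonsingular
    (n : ℕ) (Ω₁ Ω₂ : Matrix (Fin n) (Fin n) ℝ)
    (hsym₁ : Ω₁.IsSymm) (hsym₂ : Ω₂.IsSymm)
    (hrank : Ω₁.rank + Ω₂.rank = n)
    (hker : LinearMap.ker Ω₁.mulVecLin ⊓ LinearMap.ker Ω₂.mulVecLin = ⊥) :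
    ∀ t : ℝ, t ≠ 0 → t ≠ 1 → (t • Ω₁ + (1 - t) • Ω₂).det ≠ 0 := by
  intro t ht0 ht1 hdet
  set C : Matrix (Fin n ⊕ Fin n) (Fin n) ℝ := Matrix.fromRows Ω₁ Ω₂ with hC
  have hkerC : LinearMap.ker C.mulVecLin = ⊥ := by
    rw [eq_bot_iff]
    intro v hv
    rw [LinearMap.mem_ker, Matrix.mulVecLin_apply, hC, Matrix.fromRows_mulVec] at hv
    have h1 : Ω₁ *ᵥ v = 0 := by ext i; exact congrFun hv (Sum.inl i)
    have h2 : Ω₂ *ᵥ v = 0 := by ext i; exact congrFun hv (Sum.inr i)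
    have hv' : v ∈ LinearMap.ker Ω₁.mulVecLin ⊓ LinearMap.ker Ω₂.mulVecLin := ⟨h1, h2⟩
    rw [hker] at hv'
    exact hv'
  have hrankC : C.rank = n := by
    have h := LinearMap.finrank_range_add_finrank_ker C.mulVecLin
    rw [hkerC, finrank_bot, add_zero, Module.finrank_fin_fun] at h
    exact h
  have hrankCT : Cᵀ.rank = n := by rw [Matrix.rank_transpose]; exact hrankC
  have hCT : Cᵀ = Matrix.fromCols Ω₁ Ω₂ := by
    rw [hC, Matrix.transpose_fromRows, hsym₁.eq, hsym₂.eq]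
  have hrange : LinearMap.range Cᵀ.mulVecLin
      = LinearMap.range Ω₁.mulVecLin ⊔ LinearMap.range Ω₂.mulVecLin := by
    apply le_antisymm
    · rintro x ⟨v, rfl⟩
      rw [Matrix.mulVecLin_apply, hCT]
      have hv : v = Sum.elim (v ∘ Sum.inl) (v ∘ Sum.inr) := by ext (_ | _) <;> rfl
      rw [hv, Matrix.fromCols_mulVec_sumElim]
      exact Submodule.add_mem_sup ⟨v ∘ Sum.inl, rfl⟩ ⟨v ∘ Sum.inr, rfl⟩
    · rw [sup_le_iff]
      constructor
      · rintro x ⟨v, rfl⟩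
        refine ⟨Sum.elim v 0, ?_⟩
        rw [Matrix.mulVecLin_apply, hCT, Matrix.fromCols_mulVec_sumElim]
        simp
      · rintro x ⟨v, rfl⟩
        refine ⟨Sum.elim 0 v, ?_⟩
        rw [Matrix.mulVecLin_apply, hCT, Matrix.fromCols_mulVec_sumElim]
        simp
  have hsup : LinearMap.range Ω₁.mulVecLin ⊔ LinearMap.range Ω₂.mulVecLin = ⊤ := by
    apply Submodule.eq_top_of_finrank_eq
    rw [← hrange, Module.finrank_fin_fun]
    exact hrankCT
  have hinf : LinearMap.range Ω₁.mulVecLin ⊓ LinearMap.range Ω₂.mulVecLin = ⊥ := by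
    have hd := Submodule.finrank_sup_add_finrank_inf_eq
      (LinearMap.range Ω₁.mulVecLin) (LinearMap.range Ω₂.mulVecLin)
    rw [hsup, finrank_top, Module.finrank_fin_fun] at hd
    have hr : Module.finrank ℝ ↥(LinearMap.range Ω₁.mulVecLin)
        + Module.finrank ℝ ↥(LinearMap.range Ω₂.mulVecLin) = n := hrank
    rw [hr] at hd
    exact Submodule.finrank_eq_zero.mp (by omega)
  -- get a nonzero kernel vector
  obtain ⟨v, hv0, hv⟩ := (Matrix.exists_mulVec_eq_zero_iff).mpr hdet
  rw [Matrix.add_mulVec, Matrix.smul_mulVec, Matrix.smul_mulVec] at hv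
  have hx1 : t • (Ω₁ *ᵥ v) ∈ LinearMap.range Ω₁.mulVecLin ⊓ LinearMap.range Ω₂.mulVecLin := by
    constructor
    · exact Submodule.smul_mem _ t ⟨v, rfl⟩
    · have : t • (Ω₁ *ᵥ v) = -((1 - t) • (Ω₂ *ᵥ v)) := by
        rw [eq_neg_iff_add_eq_zero]; exact hv
      rw [this]
      exact Submodule.neg_mem _ (Submodule.smul_mem _ _ ⟨v, rfl⟩)
  rw [hinf, Submodule.mem_bot] at hx1
  have h1 : Ω₁ *ᵥ v = 0 := by
    rcases smul_eq_zero.mp hx1 with h | h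
    · exact absurd h ht0
    · exact h
  have h2 : Ω₂ *ᵥ v = 0 := by
    rw [h1, smul_zero, zero_add] at hv
    rcases smul_eq_zero.mp hv with h | h
    · exact absurd (by linarith : t = 1) ht1
    · exact h
  have : v ∈ LinearMap.ker Ω₁.mulVecLin ⊓ LinearMap.ker Ω₂.mulVecLin := ⟨h1, h2⟩
  rw [hker, Submodule.mem_bot] at this
  exact hv0 this
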